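/- Let Γ be a finite additive abelian group, S a multiset of elements of Γ with Cayley sum adjacency matrix A_S, and χ : Γ → ℂ an additive character that is not real-valued. Let α ∈ ℂ satisfy |α| = 1 and α² · χ(S) = |χ(S)|, and set x(v) = α·χ(v). Then the real-part vector Re(x) and the imaginary-part vector Im(x) are both nonzero, and they are real eigenvectors of A_S: A_S · Re(x) = |χ(S)| · Re(x) and A_S · Im(x) = −|χ(S)| · Im(x). -/

import Mathlib

/-- With `Γ`, `S`, a non-real additive character `χ`, and `α` with `|α| = 1`
and `α² · χ(S) = |χ(S)|` as before, set `x v = α · χ v`.  Then the entrywise real part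
`Re x` and imaginary part `Im x` are nonzero real vectors, and they are eigenvectors of
the real Cayley sum adjacency matrix `A_S(u,v) = m_S(u+v)` for the eigenvalues
`|χ(S)|` and `−|χ(S)|` respectively. -/
theorem cayley_sum_real_imaginary_eigenvectors
    {Γ : Type*} [AddCommGroup Γ] [Fintype Γ] [DecidableEq Γ]
    (S : Multiset Γ) (χ : Γ → ℂ)
    (hχ0 : χ 0 = 1) (hχadd : ∀ a b : Γ, χ (a + b) = χ a * χ b)
    (hnotreal : ¬ ∀ a : Γ, (χ a).im = 0)
    (α : ℂ) (hα : ‖α‖ = 1)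
    (hα2 : α ^ 2 * (S.map χ).sum = (‖(S.map χ).sum‖ : ℂ)) :
    (fun v : Γ => (α * χ v).re) ≠ 0 ∧
    (fun v : Γ => (α * χ v).im) ≠ 0 ∧
    (Matrix.of fun u v : Γ => (S.count (u + v) : ℝ)).mulVec (fun v => (α * χ v).re)
      = ‖(S.map χ).sum‖ • (fun v => (α * χ v).re) ∧
    (Matrix.of fun u v : Γ => (S.count (u + v) : ℝ)).mulVec (fun v => (α * χ v).im)
      = (-‖(S.map χ).sum‖) • (fun v => (α * χ v).im) := by
  classical
  set c : ℂ := (S.map χ).sum with hc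
  have hαconj : (starRingEnd ℂ) α * α = 1 := by
    have := Complex.normSq_eq_norm_sq α
    rw [hα] at this
    have h2 : Complex.normSq α = 1 := by simpa using this
    have := Complex.mul_conj α
    rw [h2] at this
    push_cast at this
    rw [mul_comm] at this
    exact this
  -- |χ v| = 1 for all v
  have habs1 : ∀ v : Γ, ‖χ v‖ = 1 := by
    intro v
    have hpow : ∀ n : ℕ, χ (n • v) = χ v ^ n := by
      intro n
      induction n with
      | zero => simpa using hχ0
      | succ k ih => rw [succ_nsmul, hχadd, ih, pow_succ]
    have hn : χ v ^ Fintype.card Γ = 1 := by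
      have h := hpow (Fintype.card Γ)
      rwa [card_nsmul_eq_zero, hχ0, eq_comm] at h
    have habs : ‖χ v‖ ^ Fintype.card Γ = 1 := by
      rw [← norm_pow, hn, norm_one]
    by_contra hne
    rcases lt_or_gt_of_ne hne with hlt | hgt
    · have : ‖χ v‖ ^ Fintype.card Γ < 1 :=
        pow_lt_one₀ (norm_nonneg _) hlt Fintype.card_ne_zero
      linarith
    · have : 1 < ‖χ v‖ ^ Fintype.card Γ :=
        one_lt_pow₀ hgt Fintype.card_ne_zero
      linarith
  -- conjugate of χ
  have hconj : ∀ v : Γ, (starRingEnd ℂ) (χ v) = χ (-v) := by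
    intro v
    have h1 : χ v * χ (-v) = 1 := by
      rw [← hχadd, add_neg_cancel, hχ0]
    have h2 : (χ v)⁻¹ = (starRingEnd ℂ) (χ v) :=
      Complex.inv_eq_conj (by simpa using habs1 v)
    rw [← h2]
    exact (eq_inv_of_mul_eq_one_right h1).symm
  -- sum over univ equals multiset sum
  have hsum : ∀ f : Γ → ℂ, ∑ v : Γ, (S.count v : ℂ) * f v = (S.map f).sum := by
    intro f
    rw [Finset.sum_multiset_map_count]
    rw [← Finset.sum_subset (Finset.subset_univ S.toFinset)]
    · exact Finset.sum_congr rfl fun v _ => by rw [nsmul_eq_mul]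
    · intro v _ hv
      have : S.count v = 0 := by
        simpa using Multiset.count_eq_zero_of_notMem (by simpa using hv)
      simp [this]
  -- key complex identity
  have key : ∀ u : Γ, ∑ v : Γ, (S.count (u + v) : ℂ) * (α * χ v)
      = (‖c‖ : ℂ) * (starRingEnd ℂ) (α * χ u) := by
    intro u
    have h1 : ∑ v : Γ, (S.count (u + v) : ℂ) * (α * χ v)
        = α * χ (-u) * c := by
      have hre : ∑ v : Γ, (S.count (u + v) : ℂ) * (α * χ v)
          = ∑ w : Γ, (S.count w : ℂ) * (α * χ (-u + w)) := by
        apply Fintype.sum_equiv (Equiv.addLeft u)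
        intro v
        simp [Equiv.addLeft]
      rw [hre]
      have : ∀ w : Γ, (S.count w : ℂ) * (α * χ (-u + w))
          = α * χ (-u) * ((S.count w : ℂ) * χ w) := by
        intro w
        rw [hχadd]
        ring
      rw [Finset.sum_congr rfl fun w _ => this w, ← Finset.mul_sum, hsum χ, ← hc]
    rw [h1, map_mul, hconj u]
    have h2 : (‖c‖ : ℂ) = α ^ 2 * c := hα2.symm
    rw [h2]
    have : α ^ 2 * c * ((starRingEnd ℂ) α * χ (-u))
        = ((starRingEnd ℂ) α * α) * (α * χ (-u) * c) := by ring
    rw [this, hαconj, one_mul]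
  -- real-part versions
  have keyRe : ∀ u : Γ, ∑ v : Γ, (S.count (u + v) : ℝ) * (α * χ v).re
      = ‖c‖ * (α * χ u).re := by
    intro u
    have h := congrArg Complex.re (key u)
    rw [Complex.re_sum] at h
    have hL : ∀ v : Γ, ((S.count (u + v) : ℂ) * (α * χ v)).re
        = (S.count (u + v) : ℝ) * (α * χ v).re := by
      intro v
      rw [show ((S.count (u + v) : ℕ) : ℂ) = (((S.count (u + v) : ℕ) : ℝ) : ℂ) by push_cast; ring]
      exact Complex.re_ofReal_mul _ _
    rw [Finset.sum_congr rfl fun v _ => hL v] at h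
    rw [h, Complex.re_ofReal_mul, Complex.conj_re]
  have keyIm : ∀ u : Γ, ∑ v : Γ, (S.count (u + v) : ℝ) * (α * χ v).im
      = -(‖c‖ * (α * χ u).im) := by
    intro u
    have h := congrArg Complex.im (key u)
    rw [Complex.im_sum] at h
    have hL : ∀ v : Γ, ((S.count (u + v) : ℂ) * (α * χ v)).im
        = (S.count (u + v) : ℝ) * (α * χ v).im := by
      intro v
      rw [show ((S.count (u + v) : ℕ) : ℂ) = (((S.count (u + v) : ℕ) : ℝ) : ℂ) by push_cast; ring]
      exact Complex.im_ofReal_mul _ _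
    rw [Finset.sum_congr rfl fun v _ => hL v] at h
    rw [h, Complex.im_ofReal_mul, Complex.conj_im]
    ring
  refine ⟨?_, ?_, ?_, ?_⟩
  · -- Re x ≠ 0
    intro h0
    apply hnotreal
    intro a
    have hre : ∀ v : Γ, (α * χ v).re = 0 := fun v => congrFun h0 v
    have hα0 : α.re = 0 := by
      have := hre 0
      rwa [hχ0, mul_one] at this
    have hχv : χ a = (starRingEnd ℂ) α * (α * χ a) := by
      rw [← mul_assoc, hαconj, one_mul]
    have : (χ a).im = ((starRingEnd ℂ) α * (α * χ a)).im := by rw [← hχv]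
    rw [this, Complex.mul_im, Complex.conj_re, Complex.conj_im, hα0, hre a]
    ring
  · -- Im x ≠ 0
    intro h0
    apply hnotreal
    intro a
    have him : ∀ v : Γ, (α * χ v).im = 0 := fun v => congrFun h0 v
    have hα0 : α.im = 0 := by
      have := him 0
      rwa [hχ0, mul_one] at this
    have hχv : χ a = (starRingEnd ℂ) α * (α * χ a) := by
      rw [← mul_assoc, hαconj, one_mul]
    have : (χ a).im = ((starRingEnd ℂ) α * (α * χ a)).im := by rw [← hχv]
    rw [this, Complex.mul_im, Complex.conj_re, Complex.conj_im, hα0, him a]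
    ring
  · funext u
    simpa [Matrix.mulVec, dotProduct] using keyRe u
  · funext u
    simpa [Matrix.mulVec, dotProduct] using keyIm u
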